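/- (Derivative of the second projected coordinate.) Let ℓ ≥ 1, let (c,d) ∈ ℝ² with c ≠ 0, take speed ϱ = c, and let (t,s) ∈ ℝ². Along the disto-line t(τ) = t + cτ, s(τ) = s + (d/f_ℓ(c))(f_ℓ(t(τ)) − f_ℓ(t)), set ρ(τ) := ρ(t(τ),s(τ)) and s̃(τ) := s(τ)/ρ(τ)^ℓ. Then at every τ₀ with ρ(τ₀) > 0, s̃ is differentiable at τ₀ and s̃′(τ₀) = −ℓ |c|^{1−ℓ} · (t(τ₀)|t(τ₀)|^{2ℓ−2} / ρ(τ₀)^{3ℓ}) · Δ_ℓ((c,d);(t,s)). -/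

import Mathlib

open MeasureTheory Real Set

noncomputable section

/-- `f_ℓ(σ) = σ|σ|^{ℓ-1}`. -/
def fl (l : ℝ) (σ : ℝ) : ℝ := σ * |σ| ^ (l - 1)

/-- The disto-scalar product `⟨v|w⟩_ℓ`. -/
def distoDot (l : ℝ) (v w : ℝ × ℝ) : ℝ := fl l v.1 * fl l w.1 + v.2 * w.2

/-- The distorted determinant `Δ_ℓ(v;w)`. -/
def distoDet (l : ℝ) (v w : ℝ × ℝ) : ℝ := fl l v.1 * w.2 - v.2 * fl l w.1

/-- The quasihomogeneous gauge `ρ(t,s)`. -/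
def qgauge (l : ℝ) (p : ℝ × ℝ) : ℝ := (|p.1| ^ (2 * l) + p.2 ^ 2) ^ (1 / (2 * l))

/-- First coordinate of the disto-line through `(t,s)` parallel to `(c,d)` with speed `ϱ`. -/
def lineT (ϱ t : ℝ) (τ : ℝ) : ℝ := t + ϱ * τ

/-- Second coordinate of the disto-line through `(t,s)` parallel to `(c,d)` with speed `ϱ`. -/
def lineS (l c d ϱ t s : ℝ) (τ : ℝ) : ℝ := s + d / fl l c * (fl l (t + ϱ * τ) - fl l t)

lemma abs_rpow_mul_self (x p : ℝ) : |x| ^ p * |x| ^ p = |x| ^ (2 * p) := by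
  rcases eq_or_ne x 0 with hx | hx
  · rcases eq_or_ne p 0 with hp | hp
    · simp [hx, hp]
    · rw [hx, abs_zero, Real.zero_rpow hp, Real.zero_rpow (mul_ne_zero two_ne_zero hp)]; ring
  · rw [← Real.rpow_add (abs_pos.2 hx)]; ring_nf

lemma fl_sq (l : ℝ) (hl : 1 ≤ l) (x : ℝ) : fl l x ^ 2 = |x| ^ (2 * l) := by
  rcases eq_or_ne x 0 with hx | hx
  · have : (2:ℝ) * l ≠ 0 := by positivity
    simp [fl, hx, Real.zero_rpow this]
  · have hx' : (0:ℝ) < |x| := abs_pos.2 hx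
    rw [fl, mul_pow, ← sq_abs x, ← Real.rpow_two, ← Real.rpow_natCast (|x| ^ (l-1)) 2,
      ← Real.rpow_mul hx'.le, ← Real.rpow_add hx']
    norm_num; ring_nf

lemma hasDerivAt_fl (l : ℝ) (hl : 1 ≤ l) (x : ℝ) :
    HasDerivAt (fl l) (l * |x| ^ (l - 1)) x := by
  rcases lt_trichotomy x 0 with hx | hx | hx
  · have h : HasDerivAt (fun σ : ℝ => -((-σ) ^ l)) (l * (-x) ^ (l - 1)) x := by
      have := (Real.hasDerivAt_rpow_const (p := l) (Or.inl (neg_ne_zero.2 hx.ne))).comp x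
        ((hasDerivAt_id x).neg)
      exact this.neg.congr_deriv (by ring)
    refine h.congr_of_eventuallyEq ?_ |>.congr_deriv ?_
    · filter_upwards [eventually_lt_nhds hx] with y hy
      rw [fl, abs_of_neg hy]
      rw [show (-y) ^ l = (-y) ^ (1 + (l-1)) by ring_nf,
        Real.rpow_add (by linarith) , Real.rpow_one]
      ring
    · rw [abs_of_neg hx]
  · rcases eq_or_lt_of_le hl with h1 | h1
    · have : fl l = fun σ => σ := by
        funext σ; simp [fl, ← h1]
      rw [this, hx, ← h1]; exact (hasDerivAt_id' (0:ℝ)).congr_deriv (by simp)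
    · rw [hx]
      rw [hasDerivAt_iff_tendsto_slope]
      have hval : l * |(0:ℝ)| ^ (l - 1) = 0 := by
        rw [abs_zero, Real.zero_rpow (by linarith)]; ring
      rw [hval]
      have : Filter.Tendsto (fun h : ℝ => |h| ^ (l - 1)) (nhdsWithin 0 {0}ᶜ) (nhds 0) := by
        have hc : ContinuousAt (fun y : ℝ => y ^ (l-1)) 0 :=
          Real.continuousAt_rpow_const 0 (l-1) (Or.inr (by linarith))
        have h0 : Filter.Tendsto (fun h : ℝ => |h|) (nhds (0:ℝ)) (nhds 0) := by
          simpa using continuous_abs.tendsto (0:ℝ)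
        have := (hc.tendsto.comp h0).mono_left (nhdsWithin_le_nhds (s := {(0:ℝ)}ᶜ))
        simpa [Function.comp_def, Real.zero_rpow (show l - 1 ≠ 0 by linarith)] using this
      refine this.congr' ?_
      filter_upwards [self_mem_nhdsWithin] with h hh
      simp only [Set.mem_compl_iff, Set.mem_singleton_iff] at hh
      rw [slope_def_field, fl]
      simp only [fl]
      field_simp
      ring
  · have h : HasDerivAt (fun σ : ℝ => σ ^ l) (l * x ^ (l - 1)) x :=
      Real.hasDerivAt_rpow_const (Or.inl hx.ne')
    refine h.congr_of_eventuallyEq ?_ |>.congr_deriv ?_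
    · filter_upwards [eventually_gt_nhds hx] with y hy
      rw [fl, abs_of_pos hy, show y ^ l = y ^ (1 + (l-1)) by ring_nf,
        Real.rpow_add hy, Real.rpow_one]
    · rw [abs_of_pos hx]

lemma alg (l a c d K S fc r e : ℝ) (hr : r ≠ 0) (hfc : fc ≠ 0)
    (hr2 : r ^ 2 = K ^ 2 + S ^ 2) (he : e * fc = c) :
    -(l * e * (K * a / (r ^ 2 * r)) * (fc * S - d * K)) =
    (d / fc * (l * a * c) * r - S * ((2 * K * (l * a * c) + 2 * S * (d / fc * (l * a * c))) / (2 * r))) / r ^ 2 := by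
  rw [← he]
  field_simp
  ring_nf
  linear_combination (-(l * e * a * d)) * hr2

/-- derivative of the second projected coordinate. -/
theorem hasDerivAt_projected_s (l : ℝ) (hl : 1 ≤ l) (c d : ℝ) (hc : c ≠ 0) (t s : ℝ)
    (τ₀ : ℝ) (hρ : 0 < qgauge l (lineT c t τ₀, lineS l c d c t s τ₀)) :
    HasDerivAt (fun τ => lineS l c d c t s τ / qgauge l (lineT c t τ, lineS l c d c t s τ) ^ l)
      (-(l * |c| ^ (1 - l) *
        (lineT c t τ₀ * |lineT c t τ₀| ^ (2 * l - 2) /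
          qgauge l (lineT c t τ₀, lineS l c d c t s τ₀) ^ (3 * l)) *
        distoDet l (c, d) (t, s))) τ₀ := by
  have hl0 : l ≠ 0 := by linarith
  have hcb : (0:ℝ) < |c| ^ (l - 1) := Real.rpow_pos_of_pos (abs_pos.2 hc) _
  have hfc : fl l c ≠ 0 := mul_ne_zero hc hcb.ne'
  -- abbreviations
  set T0 : ℝ := lineT c t τ₀ with hT0def
  set S0 : ℝ := lineS l c d c t s τ₀ with hS0def
  set K0 : ℝ := fl l T0 with hK0def
  set a : ℝ := |T0| ^ (l - 1) with hadef
  -- gauge facts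
  have hGfun : ∀ τ : ℝ, |lineT c t τ| ^ (2 * l) + (lineS l c d c t s τ) ^ 2
      = fl l (lineT c t τ) ^ 2 + (lineS l c d c t s τ) ^ 2 := fun τ => by
    rw [fl_sq l hl]
  have hXpos : 0 < |T0| ^ (2 * l) + S0 ^ 2 := by
    rcases lt_or_eq_of_le (by positivity : (0:ℝ) ≤ |T0| ^ (2 * l) + S0 ^ 2) with h | h
    · exact h
    · exfalso
      have : qgauge l (T0, S0) = 0 := by
        simp only [qgauge, ← h, Real.zero_rpow (one_div_ne_zero (by positivity : (2:ℝ)*l ≠ 0))]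
      rw [this] at hρ; exact lt_irrefl 0 hρ
  have hG0 : 0 < K0 ^ 2 + S0 ^ 2 := by rw [hK0def, ← hGfun τ₀, ← hT0def, ← hS0def]; exact hXpos
  set r : ℝ := Real.sqrt (K0 ^ 2 + S0 ^ 2) with hrdef
  have hr : 0 < r := Real.sqrt_pos.2 hG0
  have hr2 : r ^ 2 = K0 ^ 2 + S0 ^ 2 := Real.sq_sqrt hG0.le
  -- rewrite qgauge ^ l as sqrt
  have hqg : ∀ τ : ℝ, qgauge l (lineT c t τ, lineS l c d c t s τ) ^ l
      = Real.sqrt (fl l (lineT c t τ) ^ 2 + (lineS l c d c t s τ) ^ 2) := by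
    intro τ
    have hX : (0:ℝ) ≤ |lineT c t τ| ^ (2 * l) + (lineS l c d c t s τ) ^ 2 := by positivity
    simp only [qgauge]
    rw [← Real.rpow_mul hX, show 1 / (2 * l) * l = 1 / 2 by field_simp,
      ← Real.sqrt_eq_rpow, hGfun τ]
  -- qgauge ^ (3l)
  have hq3 : qgauge l (T0, S0) ^ (3 * l) = (K0 ^ 2 + S0 ^ 2) * r := by
    simp only [qgauge]
    rw [← Real.rpow_mul hXpos.le, show 1 / (2 * l) * (3 * l) = 1 + 1 / 2 by field_simp; ring,
      Real.rpow_add hXpos, Real.rpow_one, ← Real.sqrt_eq_rpow,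
      show |T0| ^ (2 * l) = K0 ^ 2 from (fl_sq l hl T0).symm]
  -- derivative pieces
  have hline : HasDerivAt (fun τ : ℝ => t + c * τ) c τ₀ := by
    simpa using ((hasDerivAt_id τ₀).const_mul c).const_add t
  have hflT : HasDerivAt (fun τ : ℝ => fl l (t + c * τ)) (l * a * c) τ₀ := by
    have := (hasDerivAt_fl l hl (t + c * τ₀)).comp τ₀ hline
    simpa [Function.comp_def, hadef, hT0def, lineT, mul_assoc] using this
  have hS' : HasDerivAt (lineS l c d c t s) (d / fl l c * (l * a * c)) τ₀ := by
    unfold lineS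
    exact ((hflT.sub_const (fl l t)).const_mul (d / fl l c)).const_add s
  have hK : HasDerivAt (fun τ : ℝ => fl l (lineT c t τ)) (l * a * c) τ₀ := by
    simpa [lineT] using hflT
  have hGd : HasDerivAt (fun τ : ℝ => fl l (lineT c t τ) ^ 2 + (lineS l c d c t s τ) ^ 2)
      (2 * K0 * (l * a * c) + 2 * S0 * (d / fl l c * (l * a * c))) τ₀ := by
    have h1 := hK.pow 2
    have h2 := hS'.pow 2
    have := h1.add h2
    refine this.congr_deriv ?_
    rw [hK0def, hT0def, hS0def]
    push_cast
    ring
  have hGτ0 : fl l (lineT c t τ₀) ^ 2 + (lineS l c d c t s τ₀) ^ 2 = K0 ^ 2 + S0 ^ 2 := by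
    rw [← hT0def, ← hS0def, ← hK0def]
  have hsq : HasDerivAt (fun τ : ℝ => Real.sqrt (fl l (lineT c t τ) ^ 2 + (lineS l c d c t s τ) ^ 2))
      ((2 * K0 * (l * a * c) + 2 * S0 * (d / fl l c * (l * a * c))) / (2 * r)) τ₀ := by
    have := hGd.sqrt (by rw [hGτ0]; exact hG0.ne')
    rw [hGτ0] at this
    exact this
  have hmain := hS'.div hsq (by rw [hGτ0]; exact hr.ne')
  rw [hGτ0, ← hS0def, ← hrdef] at hmain
  -- rewrite the target function
  have hfun : (fun τ => lineS l c d c t s τ / qgauge l (lineT c t τ, lineS l c d c t s τ) ^ l)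
      = fun τ => lineS l c d c t s τ / Real.sqrt (fl l (lineT c t τ) ^ 2 + (lineS l c d c t s τ) ^ 2) := by
    funext τ; rw [hqg τ]
  rw [hfun]
  refine hmain.congr_deriv ?_
  -- value equality
  have hA : T0 * |T0| ^ (2 * l - 2) = K0 * a := by
    rw [hK0def, fl, hadef, mul_assoc, abs_rpow_mul_self]
    ring_nf
  have hdet : distoDet l (c, d) (t, s) = fl l c * S0 - d * K0 := by
    simp only [distoDet, hS0def, lineS, hK0def, hT0def, lineT]
    field_simp
    ring
  have he : |c| ^ (1 - l) * fl l c = c := by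
    rw [fl, mul_comm c, ← mul_assoc, ← Real.rpow_add (abs_pos.2 hc),
      show 1 - l + (l - 1) = 0 by ring, Real.rpow_zero, one_mul]
  rw [hq3, hA, hdet, ← hr2]
  exact (alg l a c d K0 S0 (fl l c) r (|c| ^ (1 - l)) hr.ne' hfc hr2 he).symm

end
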